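/- For any n ≥ 1, any σ ∈ Ω_n, and any x, y ∈ J, one has ξ^{-1} |φ'_σ(y)| ≤ |φ'_σ(x)| ≤ ξ |φ'_σ(y)|. -/

import Mathlib

open MeasureTheory Filter Metric

noncomputable section

/-- A cookie-cutter system on `J = [0,1]`. -/
structure CookieCutter where
  N : ℕ
  hN : 2 ≤ N
  Jsub : Fin N → Set ℝ
  f : ℝ → ℝ
  φ : Fin N → ℝ → ℝ
  c : ℝ
  γ : ℝ
  b : ℝ
  B : ℝ
  hJsub_sub : ∀ j, Jsub j ⊆ Set.Icc 0 1
  hJsub_interval : ∀ j, ∃ u v : ℝ, u ≤ v ∧ Jsub j = Set.Icc u v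
  hJsub_disj : ∀ i j, i ≠ j → Disjoint (Jsub i) (Jsub j)
  hbij : ∀ j, Set.BijOn f (Jsub j) (Set.Icc 0 1)
  hφ_maps : ∀ j, ∀ x ∈ Set.Icc (0:ℝ) 1, φ j x ∈ Jsub j
  hφ_rinv : ∀ j, ∀ x ∈ Set.Icc (0:ℝ) 1, f (φ j x) = x
  hφ_linv : ∀ j, ∀ x ∈ Jsub j, φ j (f x) = x
  hfdiff : ∀ j, ∀ x ∈ Jsub j, DifferentiableAt ℝ f x
  hφdiff : ∀ j, ∀ x ∈ Set.Icc (0:ℝ) 1, DifferentiableAt ℝ (φ j) x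
  hc : 0 < c
  hγ : γ ∈ Set.Ioc (0:ℝ) 1
  hHolder : ∀ j, ∀ x ∈ Jsub j, ∀ y ∈ Jsub j, |deriv f x - deriv f y| ≤ c * |x - y| ^ γ
  hb : IsGLB ((fun x => |deriv f x|) '' ⋃ j, Jsub j) b
  hB : IsLUB ((fun x => |deriv f x|) '' ⋃ j, Jsub j) B
  hb1 : 1 < b

namespace CookieCutter

variable (cc : CookieCutter)

/-- `φ_σ = φ_{σ_1} ∘ ⋯ ∘ φ_{σ_n}` for a word `σ`. -/
def wordMap : List (Fin cc.N) → ℝ → ℝ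
  | [] => id
  | j :: rest => cc.φ j ∘ wordMap rest

/-- The basic interval `J_σ = φ_σ(J)`. -/
def Jc (σ : List (Fin cc.N)) : Set ℝ := cc.wordMap σ '' Set.Icc 0 1

/-- The diameter `|J_σ|`. -/
def diamJ (σ : List (Fin cc.N)) : ℝ := Metric.diam (cc.Jc σ)

/-- `‖φ'_σ‖ = sup_{x ∈ J} |φ'_σ(x)|`. -/
def φnorm (σ : List (Fin cc.N)) : ℝ :=
  sSup ((fun x => |deriv (cc.wordMap σ) x|) '' Set.Icc 0 1)

/-- The distortion constant `ξ = exp (c / (b^γ − 1))`. -/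
def xi : ℝ := Real.exp (cc.c / (cc.b ^ cc.γ - 1))

/-- The cookie-cutter set `E = ⋂_{n ≥ 1} ⋃_{σ ∈ Ω_n} J_σ`. -/
def E : Set ℝ := ⋂ (n : ℕ) (_ : 1 ≤ n), ⋃ σ : Fin n → Fin cc.N, cc.Jc (List.ofFn σ)

/-- `η = ξ^{9h}`. -/
def eta (h : ℝ) : ℝ := cc.xi ^ ((9:ℝ) * h)

/-- `L = η³ ξ^{3h}`. -/
def Lconst (h : ℝ) : ℝ := (cc.eta h) ^ 3 * cc.xi ^ ((3:ℝ) * h)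

/-- A Gibbs-like measure for the cookie-cutter system: a Borel probability measure
supported on `E` with `η⁻¹|J_σ|^h ≤ μ(J_σ) ≤ η|J_σ|^h` for every word `σ`. -/
def IsGibbsLike (μ : Measure ℝ) (h : ℝ) : Prop :=
  IsProbabilityMeasure μ ∧ μ (cc.Eᶜ) = 0 ∧
    ∀ σ : List (Fin cc.N), σ ≠ [] →
      (cc.eta h)⁻¹ * cc.diamJ σ ^ h ≤ (μ (cc.Jc σ)).toReal ∧
      (μ (cc.Jc σ)).toReal ≤ cc.eta h * cc.diamJ σ ^ h

/-- A finite maximal antichain in `Ω`. -/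
def IsFMA (Γ : Finset (List (Fin cc.N))) : Prop :=
  (∀ σ ∈ Γ, σ ≠ []) ∧
  (∀ ω : ℕ → Fin cc.N, ∃ k : ℕ, 1 ≤ k ∧ (List.ofFn fun i : Fin k => ω i) ∈ Γ) ∧
  ∀ σ ∈ Γ, ∀ τ ∈ Γ, σ <+: τ → σ = τ

end CookieCutter

/-- The `n`-th quantization error of order `r`. -/
def Vnr (μ : Measure ℝ) (n : ℕ) (r : ℝ) : ℝ :=
  sInf ((fun α : Finset ℝ => ∫ x, Metric.infDist x (α : Set ℝ) ^ r ∂μ) ''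
    {α : Finset ℝ | α.Nonempty ∧ α.card ≤ n})

/-- The auxiliary quantization error `u_{n,r}` with `U = (0,1)`. -/
def unr (μ : Measure ℝ) (n : ℕ) (r : ℝ) : ℝ :=
  sInf ((fun α : Finset ℝ =>
      ∫ x, Metric.infDist x ((α : Set ℝ) ∪ (Set.Ioo (0:ℝ) 1)ᶜ) ^ r ∂μ) ''
    {α : Finset ℝ | α.card ≤ n})



namespace CookieCutter

variable (cc : CookieCutter)

lemma b_pos' : 0 < cc.b := lt_trans one_pos cc.hb1

lemma b_le_abs {j : Fin cc.N} {p : ℝ} (hp : p ∈ cc.Jsub j) : cc.b ≤ |deriv cc.f p| :=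
  cc.hb.1 ⟨p, Set.mem_iUnion.2 ⟨j, hp⟩, rfl⟩

lemma phi_mem (j : Fin cc.N) {u : ℝ} (hu : u ∈ Set.Icc (0:ℝ) 1) :
    cc.φ j u ∈ Set.Icc (0:ℝ) 1 :=
  cc.hJsub_sub j (cc.hφ_maps j u hu)

lemma phi_deriv_mul (j : Fin cc.N) {u : ℝ} (hu : u ∈ Set.Icc (0:ℝ) 1) :
    deriv cc.f (cc.φ j u) * deriv (cc.φ j) u = 1 := by
  have hφd := (cc.hφdiff j u hu).hasDerivAt
  have hfd := (cc.hfdiff j _ (cc.hφ_maps j u hu)).hasDerivAt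
  have hcomp : HasDerivWithinAt (cc.f ∘ cc.φ j)
      (deriv cc.f (cc.φ j u) * deriv (cc.φ j) u) (Set.Icc 0 1) u :=
    (hfd.comp u hφd).hasDerivWithinAt
  have hid : HasDerivWithinAt (cc.f ∘ cc.φ j) 1 (Set.Icc 0 1) u := by
    have h0 : HasDerivWithinAt (fun x : ℝ => x) 1 (Set.Icc 0 1) u :=
      (hasDerivAt_id u).hasDerivWithinAt
    exact h0.congr (fun y hy => cc.hφ_rinv j y hy) (cc.hφ_rinv j u hu)
  have hud : UniqueDiffWithinAt ℝ (Set.Icc (0:ℝ) 1) u := uniqueDiffOn_Icc one_pos u hu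
  rw [← hcomp.derivWithin hud]
  exact hid.derivWithin hud

lemma phi_deriv_abs (j : Fin cc.N) {u : ℝ} (hu : u ∈ Set.Icc (0:ℝ) 1) :
    |deriv (cc.φ j) u| = |deriv cc.f (cc.φ j u)|⁻¹ := by
  have h2 : |deriv cc.f (cc.φ j u)| * |deriv (cc.φ j) u| = 1 := by
    rw [← abs_mul, cc.phi_deriv_mul j hu, abs_one]
  exact eq_inv_of_mul_eq_one_right h2

lemma f_expand_lt (j : Fin cc.N) {p q : ℝ} (hp : p ∈ cc.Jsub j) (hq : q ∈ cc.Jsub j)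
    (hpq : p < q) : cc.b * (q - p) ≤ |cc.f q - cc.f p| := by
  obtain ⟨u, v, huv, hJ⟩ := cc.hJsub_interval j
  have hsub : Set.Icc p q ⊆ cc.Jsub j := by
    rw [hJ] at hp hq ⊢
    exact Set.Icc_subset_Icc hp.1 hq.2
  have hcont : ContinuousOn cc.f (Set.Icc p q) := fun x hx =>
    ((cc.hfdiff j x (hsub hx)).continuousAt).continuousWithinAt
  obtain ⟨c0, hc0, hslope⟩ := exists_hasDerivAt_eq_slope cc.f (deriv cc.f) hpq hcont
    (fun x hx => (cc.hfdiff j x (hsub (Set.Ioo_subset_Icc_self hx))).hasDerivAt)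
  have hb : cc.b ≤ |deriv cc.f c0| := cc.b_le_abs (hsub (Set.Ioo_subset_Icc_self hc0))
  rw [hslope, abs_div, abs_of_pos (sub_pos.2 hpq)] at hb
  have hqp : 0 < q - p := sub_pos.2 hpq
  calc cc.b * (q - p) ≤ (|cc.f q - cc.f p| / (q - p)) * (q - p) :=
        mul_le_mul_of_nonneg_right hb hqp.le
    _ = |cc.f q - cc.f p| := div_mul_cancel₀ _ hqp.ne'

lemma f_expand (j : Fin cc.N) {p q : ℝ} (hp : p ∈ cc.Jsub j) (hq : q ∈ cc.Jsub j) :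
    cc.b * |p - q| ≤ |cc.f p - cc.f q| := by
  rcases lt_trichotomy p q with h | h | h
  · rw [abs_sub_comm p q, abs_sub_comm (cc.f p), abs_of_pos (sub_pos.2 h)]
    exact cc.f_expand_lt j hp hq h
  · simp [h]
  · rw [abs_of_pos (sub_pos.2 h)]
    exact cc.f_expand_lt j hq hp h

lemma phi_contract (j : Fin cc.N) {u v : ℝ} (hu : u ∈ Set.Icc (0:ℝ) 1)
    (hv : v ∈ Set.Icc (0:ℝ) 1) : |cc.φ j u - cc.φ j v| ≤ cc.b⁻¹ * |u - v| := by
  have h := cc.f_expand j (cc.hφ_maps j u hu) (cc.hφ_maps j v hv)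
  rw [cc.hφ_rinv j u hu, cc.hφ_rinv j v hv] at h
  rw [inv_mul_eq_div, le_div_iff₀ cc.b_pos']
  linarith [h]

lemma wordMap_mem : ∀ (σ : List (Fin cc.N)) {x : ℝ}, x ∈ Set.Icc (0:ℝ) 1 →
    cc.wordMap σ x ∈ Set.Icc (0:ℝ) 1 := by
  intro σ
  induction σ with
  | nil => intro x hx; exact hx
  | cons j rest ih =>
    intro x hx
    exact cc.phi_mem j (ih hx)

lemma wordMap_contract : ∀ (σ : List (Fin cc.N)) {x y : ℝ}, x ∈ Set.Icc (0:ℝ) 1 →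
    y ∈ Set.Icc (0:ℝ) 1 →
    |cc.wordMap σ x - cc.wordMap σ y| ≤ (cc.b⁻¹) ^ σ.length * |x - y| := by
  intro σ
  induction σ with
  | nil => intro x y hx hy; simp [wordMap]
  | cons j rest ih =>
    intro x y hx hy
    have h1 : |cc.φ j (cc.wordMap rest x) - cc.φ j (cc.wordMap rest y)| ≤
        cc.b⁻¹ * |cc.wordMap rest x - cc.wordMap rest y| :=
      cc.phi_contract j (cc.wordMap_mem rest hx) (cc.wordMap_mem rest hy)
    have hbnn : (0:ℝ) ≤ cc.b⁻¹ := inv_nonneg.2 cc.b_pos'.le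
    calc |cc.wordMap (j :: rest) x - cc.wordMap (j :: rest) y|
        = |cc.φ j (cc.wordMap rest x) - cc.φ j (cc.wordMap rest y)| := rfl
      _ ≤ cc.b⁻¹ * |cc.wordMap rest x - cc.wordMap rest y| := h1
      _ ≤ cc.b⁻¹ * ((cc.b⁻¹) ^ rest.length * |x - y|) :=
          mul_le_mul_of_nonneg_left (ih hx hy) hbnn
      _ = (cc.b⁻¹) ^ (j :: rest).length * |x - y| := by
          rw [List.length_cons, pow_succ]; ring

lemma wordMap_differentiable : ∀ (σ : List (Fin cc.N)) {x : ℝ}, x ∈ Set.Icc (0:ℝ) 1 →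
    DifferentiableAt ℝ (cc.wordMap σ) x := by
  intro σ
  induction σ with
  | nil => intro x hx; exact differentiableAt_id
  | cons j rest ih =>
    intro x hx
    exact (cc.hφdiff j _ (cc.wordMap_mem rest hx)).comp x (ih hx)

lemma wordMap_deriv_cons (j : Fin cc.N) (rest : List (Fin cc.N)) {x : ℝ}
    (hx : x ∈ Set.Icc (0:ℝ) 1) :
    deriv (cc.wordMap (j :: rest)) x =
      deriv (cc.φ j) (cc.wordMap rest x) * deriv (cc.wordMap rest) x := by
  have h1 := (cc.hφdiff j _ (cc.wordMap_mem rest hx)).hasDerivAt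
  have h2 := (cc.wordMap_differentiable rest hx).hasDerivAt
  exact (h1.comp x h2).deriv

lemma phi_ratio (j : Fin cc.N) {u v : ℝ} (hu : u ∈ Set.Icc (0:ℝ) 1)
    (hv : v ∈ Set.Icc (0:ℝ) 1) :
    |deriv (cc.φ j) u| ≤
      Real.exp (cc.c * |cc.φ j u - cc.φ j v| ^ cc.γ) * |deriv (cc.φ j) v| := by
  have hp := cc.hφ_maps j u hu
  have hq := cc.hφ_maps j v hv
  have hbp := cc.b_le_abs hp
  have hbq := cc.b_le_abs hq
  have hp0 : 0 < |deriv cc.f (cc.φ j u)| := lt_of_lt_of_le cc.b_pos' hbp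
  have hq0 : 0 < |deriv cc.f (cc.φ j v)| := lt_of_lt_of_le cc.b_pos' hbq
  set t := cc.c * |cc.φ j u - cc.φ j v| ^ cc.γ with ht
  have ht0 : 0 ≤ t := mul_nonneg cc.hc.le (Real.rpow_nonneg (abs_nonneg _) _)
  have hH := cc.hHolder j _ hq _ hp
  -- |f' q| ≤ exp t * |f' p|
  have hkey : |deriv cc.f (cc.φ j v)| ≤ Real.exp t * |deriv cc.f (cc.φ j u)| := by
    have h1 : |deriv cc.f (cc.φ j v)| ≤ |deriv cc.f (cc.φ j u)| + t := by
      have := abs_sub_abs_le_abs_sub (deriv cc.f (cc.φ j v)) (deriv cc.f (cc.φ j u))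
      rw [ht]
      rw [abs_sub_comm (cc.φ j v) (cc.φ j u)] at hH
      linarith [this]
    have hb1 : (1:ℝ) ≤ cc.b := cc.hb1.le
    have h2 : t ≤ |deriv cc.f (cc.φ j u)| * t :=
      le_mul_of_one_le_left ht0 (le_trans hb1 hbp)
    have h3 : (1:ℝ) + t ≤ Real.exp t := by linarith [Real.add_one_le_exp t]
    calc |deriv cc.f (cc.φ j v)| ≤ |deriv cc.f (cc.φ j u)| + t := h1
      _ ≤ |deriv cc.f (cc.φ j u)| * (1 + t) := by nlinarith
      _ ≤ |deriv cc.f (cc.φ j u)| * Real.exp t :=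
          mul_le_mul_of_nonneg_left h3 hp0.le
      _ = Real.exp t * |deriv cc.f (cc.φ j u)| := mul_comm _ _
  rw [cc.phi_deriv_abs j hu, cc.phi_deriv_abs j hv]
  rw [inv_eq_one_div, inv_eq_one_div, mul_one_div, div_le_div_iff₀ hp0 hq0, one_mul]
  exact hkey

lemma rpow_pow_le {d : ℝ} (hd : 0 ≤ d) {n : ℕ} (h : d ≤ cc.b⁻¹ ^ n) :
    d ^ cc.γ ≤ ((cc.b⁻¹) ^ cc.γ) ^ n := by
  have hb0 : (0:ℝ) ≤ cc.b⁻¹ := inv_nonneg.2 cc.b_pos'.le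
  calc d ^ cc.γ ≤ (cc.b⁻¹ ^ n) ^ cc.γ := Real.rpow_le_rpow hd h cc.hγ.1.le
    _ = ((cc.b⁻¹) ^ cc.γ) ^ n := by
        rw [← Real.rpow_natCast (cc.b⁻¹) n, ← Real.rpow_natCast ((cc.b⁻¹) ^ cc.γ) n,
          ← Real.rpow_mul hb0, ← Real.rpow_mul hb0, mul_comm]

lemma ratio_le : ∀ (σ : List (Fin cc.N)) {x y : ℝ}, x ∈ Set.Icc (0:ℝ) 1 →
    y ∈ Set.Icc (0:ℝ) 1 →
    |deriv (cc.wordMap σ) x| ≤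
      Real.exp (cc.c * ∑ k ∈ Finset.range σ.length, ((cc.b⁻¹) ^ cc.γ) ^ (k+1)) *
        |deriv (cc.wordMap σ) y| := by
  intro σ
  induction σ with
  | nil =>
    intro x y hx hy
    simp [wordMap]
  | cons j rest ih =>
    intro x y hx hy
    have hgx := cc.wordMap_mem rest hx
    have hgy := cc.wordMap_mem rest hy
    have hφr := cc.phi_ratio j hgx hgy
    -- distance bound
    have hxy1 : |x - y| ≤ 1 := by
      rcases hx with ⟨hx0, hx1⟩; rcases hy with ⟨hy0, hy1⟩
      rw [abs_sub_le_iff]; constructor <;> linarith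
    have hdist : |cc.φ j (cc.wordMap rest x) - cc.φ j (cc.wordMap rest y)| ≤
        cc.b⁻¹ ^ (rest.length + 1) := by
      have h1 : |cc.φ j (cc.wordMap rest x) - cc.φ j (cc.wordMap rest y)| =
          |cc.wordMap (j :: rest) x - cc.wordMap (j :: rest) y| := rfl
      rw [h1]
      calc |cc.wordMap (j :: rest) x - cc.wordMap (j :: rest) y|
          ≤ (cc.b⁻¹) ^ (j :: rest).length * |x - y| := cc.wordMap_contract _ hx hy
        _ ≤ (cc.b⁻¹) ^ (rest.length + 1) * 1 := by
            exact mul_le_mul_of_nonneg_left hxy1 (pow_nonneg (inv_nonneg.2 cc.b_pos'.le) _)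
        _ = cc.b⁻¹ ^ (rest.length + 1) := mul_one _
    have hpow := cc.rpow_pow_le (abs_nonneg _) hdist
    have hexp1 : Real.exp (cc.c * |cc.φ j (cc.wordMap rest x) - cc.φ j (cc.wordMap rest y)| ^ cc.γ)
        ≤ Real.exp (cc.c * ((cc.b⁻¹) ^ cc.γ) ^ (rest.length + 1)) :=
      Real.exp_le_exp.2 (mul_le_mul_of_nonneg_left hpow cc.hc.le)
    have hφr2 : |deriv (cc.φ j) (cc.wordMap rest x)| ≤
        Real.exp (cc.c * ((cc.b⁻¹) ^ cc.γ) ^ (rest.length + 1)) *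
          |deriv (cc.φ j) (cc.wordMap rest y)| := by
      calc |deriv (cc.φ j) (cc.wordMap rest x)|
          ≤ Real.exp (cc.c * |cc.φ j (cc.wordMap rest x) - cc.φ j (cc.wordMap rest y)| ^ cc.γ) *
            |deriv (cc.φ j) (cc.wordMap rest y)| := hφr
        _ ≤ _ := mul_le_mul_of_nonneg_right hexp1 (abs_nonneg _)
    rw [cc.wordMap_deriv_cons j rest hx, cc.wordMap_deriv_cons j rest hy, abs_mul, abs_mul]
    have hihxy := ih hx hy
    calc |deriv (cc.φ j) (cc.wordMap rest x)| * |deriv (cc.wordMap rest) x|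
        ≤ (Real.exp (cc.c * ((cc.b⁻¹) ^ cc.γ) ^ (rest.length + 1)) *
            |deriv (cc.φ j) (cc.wordMap rest y)|) *
          (Real.exp (cc.c * ∑ k ∈ Finset.range rest.length, ((cc.b⁻¹) ^ cc.γ) ^ (k+1)) *
            |deriv (cc.wordMap rest) y|) := by
          apply mul_le_mul hφr2 hihxy (abs_nonneg _)
          positivity
      _ = Real.exp (cc.c * ∑ k ∈ Finset.range (j :: rest).length, ((cc.b⁻¹) ^ cc.γ) ^ (k+1)) *
          (|deriv (cc.φ j) (cc.wordMap rest y)| * |deriv (cc.wordMap rest) y|) := by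
          rw [List.length_cons, Finset.sum_range_succ, mul_add, Real.exp_add]
          ring

lemma sum_bound (n : ℕ) :
    cc.c * ∑ k ∈ Finset.range n, ((cc.b⁻¹) ^ cc.γ) ^ (k+1) ≤ cc.c / (cc.b ^ cc.γ - 1) := by
  have hb0 := cc.b_pos'
  have hs1 : 1 < cc.b ^ cc.γ :=
    Real.one_lt_rpow_iff_of_pos hb0 |>.2 (Or.inl ⟨cc.hb1, cc.hγ.1⟩)
  have hs0 : 0 < cc.b ^ cc.γ := lt_trans one_pos hs1
  have hr : (cc.b⁻¹) ^ cc.γ = (cc.b ^ cc.γ)⁻¹ := Real.inv_rpow hb0.le _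
  set s := cc.b ^ cc.γ with hsdef
  have hrange : ∀ m : ℕ, ∑ k ∈ Finset.range m, ((cc.b⁻¹) ^ cc.γ) ^ (k+1) =
      (s - 1)⁻¹ * (1 - (s⁻¹) ^ m) := by
    intro m
    induction m with
    | zero => simp
    | succ m ihm =>
      rw [Finset.sum_range_succ, ihm, hr]
      have hsne : s ≠ 0 := hs0.ne'
      have hs1ne : s - 1 ≠ 0 := sub_ne_zero.2 hs1.ne'
      field_simp
      ring_nf
      rw [mul_inv_cancel₀ hsne]
      ring
  rw [hrange n]
  have h1 : (s - 1)⁻¹ * (1 - (s⁻¹) ^ n) ≤ (s - 1)⁻¹ := by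
    have hinv : (0:ℝ) ≤ (s⁻¹) ^ n := by positivity
    have hpos : (0:ℝ) ≤ (s - 1)⁻¹ := inv_nonneg.2 (by linarith)
    nlinarith
  calc cc.c * ((s - 1)⁻¹ * (1 - (s⁻¹) ^ n)) ≤ cc.c * (s - 1)⁻¹ :=
        mul_le_mul_of_nonneg_left h1 cc.hc.le
    _ = cc.c / (s - 1) := (div_eq_mul_inv _ _).symm

lemma ratio_xi (σ : List (Fin cc.N)) {x y : ℝ} (hx : x ∈ Set.Icc (0:ℝ) 1)
    (hy : y ∈ Set.Icc (0:ℝ) 1) :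
    |deriv (cc.wordMap σ) x| ≤ cc.xi * |deriv (cc.wordMap σ) y| := by
  have h1 := cc.ratio_le σ hx hy
  have h2 : Real.exp (cc.c * ∑ k ∈ Finset.range σ.length, ((cc.b⁻¹) ^ cc.γ) ^ (k+1)) ≤ cc.xi :=
    Real.exp_le_exp.2 (cc.sum_bound σ.length)
  calc |deriv (cc.wordMap σ) x|
      ≤ Real.exp (cc.c * ∑ k ∈ Finset.range σ.length, ((cc.b⁻¹) ^ cc.γ) ^ (k+1)) *
        |deriv (cc.wordMap σ) y| := h1
    _ ≤ cc.xi * |deriv (cc.wordMap σ) y| :=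
        mul_le_mul_of_nonneg_right h2 (abs_nonneg _)

lemma xi_pos : 0 < cc.xi := Real.exp_pos _

end CookieCutter

theorem deriv_comparable (cc : CookieCutter) :
    ∀ n : ℕ, 1 ≤ n → ∀ σ : List (Fin cc.N), σ.length = n →
      ∀ x ∈ Set.Icc (0:ℝ) 1, ∀ y ∈ Set.Icc (0:ℝ) 1,
        cc.xi⁻¹ * |deriv (cc.wordMap σ) y| ≤ |deriv (cc.wordMap σ) x| ∧
        |deriv (cc.wordMap σ) x| ≤ cc.xi * |deriv (cc.wordMap σ) y| := by
  intro n hn σ hσ x hx y hy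
  refine ⟨?_, cc.ratio_xi σ hx hy⟩
  rw [inv_mul_le_iff₀ cc.xi_pos]
  exact cc.ratio_xi σ hy hx
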